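/- arXiv:1008.3190 — 3 statements merged into one kernel-verified Lean document; each statement's English description precedes it below -/
import Mathlib

section
/- Let T be a tree in which every non-leaf vertex has degree at least 4, and suppose E(T) can be covered by c connected subtrees each of maximum degree at most 3. Then the pathwidth of T is at most c. -/
/-- `PwLE G k S`: the subgraph of `G` induced on the vertex set `S` (a forest) has
pathwidth at most `k`, following the recursive definition: pathwidth `0` means no
edges (every component is a single vertex), and pathwidth at most `k+1` means one can
delete, from each component, the vertex set of a path so that the rest has pathwidth
at most `k`.  Here `P` is a set inducing paths, with at most one path per component of
the induced graph on `S`. -/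
def PwLE {V : Type*} (G : SimpleGraph V) : ℕ → Set V → Prop
  | 0, S => ∀ a ∈ S, ∀ b ∈ S, ¬ G.Adj a b
  | k + 1, S => ∃ P : Set V, P ⊆ S ∧
      (∀ v ∈ P, {w ∈ P | G.Adj v w}.ncard ≤ 2) ∧
      (∀ a ∈ P, ∀ b ∈ P,
        Relation.ReflTransGen (fun x y => x ∈ S ∧ y ∈ S ∧ G.Adj x y) a b →
        Relation.ReflTransGen (fun x y => x ∈ P ∧ y ∈ P ∧ G.Adj x y) a b) ∧
      PwLE G k (S \ P)

open scoped Classical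

namespace PWAux

variable {V : Type*} {G : SimpleGraph V}

/-- steps inside a vertex set -/
def Stp (G : SimpleGraph V) (S : Set V) (x y : V) : Prop := x ∈ S ∧ y ∈ S ∧ G.Adj x y

/-- connectivity inside a vertex set -/
def Conn (G : SimpleGraph V) (S : Set V) (x y : V) : Prop :=
  Relation.ReflTransGen (Stp G S) x y

/-- component of `S` containing `a` -/
def Cmp (G : SimpleGraph V) (S : Set V) (a : V) : Set V := {v | Conn G S a v}

/-- steps inside `S` avoiding the edge `e` -/
def StpA (G : SimpleGraph V) (S : Set V) (e : Sym2 V) (x y : V) : Prop :=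
  x ∈ S ∧ y ∈ S ∧ G.Adj x y ∧ s(x, y) ≠ e

/-- region of `S` reachable from `y` avoiding `e` -/
def Reg (G : SimpleGraph V) (S : Set V) (e : Sym2 V) (y : V) : Set V :=
  {v | Relation.ReflTransGen (StpA G S e) y v}

lemma stp_symm {S : Set V} : Symmetric (Stp G S) := by
  intro x y ⟨h1, h2, h3⟩; exact ⟨h2, h1, h3.symm⟩

lemma stpA_symm {S : Set V} {e : Sym2 V} : Symmetric (StpA G S e) := by
  intro x y ⟨h1, h2, h3, h4⟩; exact ⟨h2, h1, h3.symm, by rwa [Sym2.eq_swap]⟩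

lemma conn_symm {S : Set V} {x y : V} (h : Conn G S x y) : Conn G S y x :=
  (@Relation.ReflTransGen.symmetric _ _ ⟨fun a b h => stp_symm h⟩).symm _ _ h

lemma conn_trans {S : Set V} {x y z : V} (h : Conn G S x y) (h' : Conn G S y z) :
    Conn G S x z := h.trans h'

lemma mem_cmp_self {S : Set V} {a : V} : a ∈ Cmp G S a := Relation.ReflTransGen.refl

lemma cmp_subset {S : Set V} {a : V} (ha : a ∈ S) : Cmp G S a ⊆ S := by
  intro v hv
  induction hv with
  | refl => exact ha
  | tail _ h ih => exact h.2.1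

lemma cmp_eq_of_conn {S : Set V} {a b : V} (h : Conn G S a b) : Cmp G S a = Cmp G S b := by
  ext v; constructor
  · intro hv; exact conn_trans (conn_symm h) hv
  · intro hv; exact conn_trans h hv

lemma mem_cmp_iff {S : Set V} {a v : V} : v ∈ Cmp G S a ↔ Conn G S a v := Iff.rfl

/-- a connectivity chain from a point of a component stays in the component -/
lemma conn_in_cmp {S : Set V} {a x y : V} (hx : x ∈ Cmp G S a) (h : Conn G S x y) :
    Relation.ReflTransGen (Stp G (Cmp G S a)) x y := by
  induction h with
  | refl => exact Relation.ReflTransGen.refl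
  | @tail b c hb hbc ih =>
      have hbK : b ∈ Cmp G S a := conn_trans hx hb
      have hcK : c ∈ Cmp G S a := conn_trans hbK (Relation.ReflTransGen.single hbc)
      exact ih.tail ⟨hbK, hcK, hbc.2.2⟩

lemma reg_mem_self {S : Set V} {e : Sym2 V} {y : V} : y ∈ Reg G S e y :=
  Relation.ReflTransGen.refl

lemma reg_subset {S : Set V} {e : Sym2 V} {y : V} (hy : y ∈ S) : Reg G S e y ⊆ S := by
  intro v hv
  induction hv with
  | refl => exact hy
  | tail _ h _ => exact h.2.1

lemma reg_mono {S S' : Set V} (hss : S ⊆ S') {e : Sym2 V} {y : V} :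
    Reg G S e y ⊆ Reg G S' e y := by
  intro v hv
  induction hv with
  | refl => exact Relation.ReflTransGen.refl
  | tail _ h ih => exact ih.tail ⟨hss h.1, hss h.2.1, h.2.2.1, h.2.2.2⟩

/-- membership in a region is invariant along avoiding chains -/
lemma reg_closed {S : Set V} {e : Sym2 V} {y a b : V}
    (hch : Relation.ReflTransGen (StpA G S e) a b) (ha : a ∈ Reg G S e y) :
    b ∈ Reg G S e y := ha.trans hch

lemma reg_closed' {S : Set V} {e : Sym2 V} {y a b : V}
    (hch : Relation.ReflTransGen (StpA G S e) a b) (hb : b ∈ Reg G S e y) :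
    a ∈ Reg G S e y :=
  hb.trans ((@Relation.ReflTransGen.symmetric _ _ ⟨fun a b h => stpA_symm h⟩).symm _ _ hch)

/-- decompose a chain at the first use of the edge `e` -/
lemma first_use {S : Set V} {e : Sym2 V} {a b : V}
    (h : Relation.ReflTransGen (Stp G S) a b) :
    (Relation.ReflTransGen (StpA G S e) a b) ∨
    (∃ x x', Relation.ReflTransGen (StpA G S e) a x ∧ Stp G S x x' ∧ s(x, x') = e ∧
       Relation.ReflTransGen (Stp G S) x' b) := by
  induction h with
  | refl => exact Or.inl Relation.ReflTransGen.refl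
  | @tail m c hm hmc ih =>
      rcases ih with h1 | ⟨x, x', h1, h2, h3, h4⟩
      · by_cases he : s(m, c) = e
        · exact Or.inr ⟨m, c, h1, hmc, he, Relation.ReflTransGen.refl⟩
        · exact Or.inl (h1.tail ⟨hmc.1, hmc.2.1, hmc.2.2, he⟩)
      · exact Or.inr ⟨x, x', h1, h2, h3, h4.tail hmc⟩

lemma first_use_gen {Q : V → V → Prop} {e : Sym2 V} {a b : V}
    (h : Relation.ReflTransGen Q a b) :
    (Relation.ReflTransGen (fun x y => Q x y ∧ s(x, y) ≠ e) a b) ∨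
    (∃ x x', Relation.ReflTransGen (fun x y => Q x y ∧ s(x, y) ≠ e) a x ∧ Q x x' ∧
      s(x, x') = e ∧ Relation.ReflTransGen Q x' b) := by
  induction h with
  | refl => exact Or.inl Relation.ReflTransGen.refl
  | @tail m c hm hmc ih =>
      rcases ih with h1 | ⟨x, x', h1, h2, h3, h4⟩
      · by_cases he : s(m, c) = e
        · exact Or.inr ⟨m, c, h1, hmc, he, Relation.ReflTransGen.refl⟩
        · exact Or.inl (h1.tail ⟨hmc, he⟩)
      · exact Or.inr ⟨x, x', h1, h2, h3, h4.tail hmc⟩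

/-- a generic crossing lemma: a chain whose endpoints are on different sides of the
region of `e` must use the edge `e`. -/
lemma cross {P : V → V → Prop} (hP : ∀ x y, P x y → G.Adj x y) {S : Set V}
    (hS : ∀ x y, P x y → x ∈ S ∧ y ∈ S)
    {e : Sym2 V} {y₀ a b : V} (hchain : Relation.ReflTransGen P a b)
    (hnot : ¬ (a ∈ Reg G S e y₀ ↔ b ∈ Reg G S e y₀)) :
    ∃ x w, P x w ∧ s(x, w) = e := by
  induction hchain with
  | refl => exact absurd Iff.rfl hnot
  | @tail m c hm hmc ih =>
      by_cases he : s(m, c) = e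
      · exact ⟨m, c, hmc, he⟩
      · have hstep : StpA G S e m c := ⟨(hS _ _ hmc).1, (hS _ _ hmc).2, hP _ _ hmc, he⟩
        have hmc' : m ∈ Reg G S e y₀ ↔ c ∈ Reg G S e y₀ :=
          ⟨fun h => reg_closed (Relation.ReflTransGen.single hstep) h,
           fun h => reg_closed' (Relation.ReflTransGen.single hstep) h⟩
        exact ih (fun hiff => hnot (hiff.trans hmc'))

/-! ### tree facts -/

lemma chain_of_walk {x y : V} (q : G.Walk x y) (L : List (Sym2 V)) (hL : ∀ e ∈ q.edges, e ∈ L) :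
    Relation.ReflTransGen (fun a b => G.Adj a b ∧ s(a, b) ∈ L) x y := by
  induction q with
  | nil => exact Relation.ReflTransGen.refl
  | @cons u v w h q ih =>
      refine Relation.ReflTransGen.head ⟨h, hL _ ?_⟩ (ih fun e he => hL _ ?_)
      · simp [SimpleGraph.Walk.edges_cons]
      · simp [SimpleGraph.Walk.edges_cons, he]

/-- in an acyclic graph, the tail of an edge is not in the region of its head -/
lemma tail_not_mem_reg (hT : G.IsAcyclic) {z y : V} (h : G.Adj z y) :
    z ∉ Reg G Set.univ s(z, y) y := by
  intro hz
  have hbridge : G.IsBridge s(z, y) :=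
    (SimpleGraph.isAcyclic_iff_forall_adj_isBridge.mp hT) h
  rw [SimpleGraph.isBridge_iff] at hbridge
  apply hbridge
  apply SimpleGraph.Reachable.symm
  -- from the chain y →* z avoiding e, build reachability in G \ e
  have : ∀ v, v ∈ Reg G Set.univ s(z, y) y →
      (G \ SimpleGraph.fromEdgeSet {s(z, y)}).Reachable y v := by
    intro v hv
    induction hv with
    | refl => exact SimpleGraph.Reachable.refl _
    | @tail b c hb hbc ih =>
        refine ih.trans (SimpleGraph.Adj.reachable ?_)
        rw [SimpleGraph.sdiff_adj]
        refine ⟨hbc.2.2.1, ?_⟩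
        rw [SimpleGraph.fromEdgeSet_adj]
        rintro ⟨h1, -⟩
        exact hbc.2.2.2 (by simpa using h1)
  exact this z hz

lemma sides_disjoint (hT : G.IsAcyclic) {z y v : V} (h : G.Adj z y) :
    ¬ (v ∈ Reg G Set.univ s(z, y) y ∧ v ∈ Reg G Set.univ s(z, y) z) := by
  rintro ⟨h1, h2⟩
  apply tail_not_mem_reg hT h
  have h2' : Relation.ReflTransGen (StpA G Set.univ s(z, y)) z v := h2
  exact reg_closed' h2' h1

/-- complement of a region inside a component: reachability to the other endpoint -/
lemma compl_reg {S : Set V} {a₀ : V} {z y v : V}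
    (hy : y ∈ Cmp G S a₀) (hzy : G.Adj z y)
    (hv : v ∈ Cmp G S a₀) (hvn : v ∉ Reg G (Cmp G S a₀) s(z, y) y) :
    v ∈ Reg G (Cmp G S a₀) s(z, y) z := by
  set K := Cmp G S a₀
  have hchain : Relation.ReflTransGen (Stp G K) v y := by
    have : Conn G S v y := conn_trans (conn_symm hv) hy
    exact conn_in_cmp hv this
  rcases first_use (e := s(z, y)) hchain with h1 | ⟨x, x', h1, h2, h3, h4⟩
  · exact absurd (reg_closed' h1 reg_mem_self) hvn
  · -- s(x,x') = s(z,y)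
    rw [Sym2.eq_iff] at h3
    rcases h3 with ⟨rfl, rfl⟩ | ⟨rfl, rfl⟩
    · exact reg_closed' h1 reg_mem_self
    · exact absurd (reg_closed' h1 reg_mem_self) hvn

lemma reg_univ_iff_step {e : Sym2 V} {y₀ x w : V} (hadj : G.Adj x w) (hne : s(x, w) ≠ e) :
    (x ∈ Reg G Set.univ e y₀ ↔ w ∈ Reg G Set.univ e y₀) := by
  have hstep : StpA G Set.univ e x w := ⟨trivial, trivial, hadj, hne⟩
  exact ⟨fun h => reg_closed (Relation.ReflTransGen.single hstep) h,
         fun h => reg_closed' (Relation.ReflTransGen.single hstep) h⟩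

lemma reg_univ_of_walk_avoid {e : Sym2 V} {x v : V} (r : G.Walk x v) (he : e ∉ r.edges) :
    v ∈ Reg G Set.univ e x := by
  induction r with
  | nil => exact reg_mem_self
  | @cons a m b h r ih =>
      have h1 : s(a, m) ≠ e := by
        intro hh; exact he (by simp [SimpleGraph.Walk.edges_cons, hh])
      have h2 : e ∉ r.edges := fun hh => he (by simp [SimpleGraph.Walk.edges_cons, hh])
      exact Relation.ReflTransGen.head ⟨trivial, trivial, h, h1⟩ (ih h2)

/-- a walk between points on different sides of `e` contains `e` -/
lemma walk_cross {e : Sym2 V} {y₀ u w : V} (q : G.Walk u w)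
    (hnot : ¬ (u ∈ Reg G Set.univ e y₀ ↔ w ∈ Reg G Set.univ e y₀)) : e ∈ q.edges := by
  have hchain := chain_of_walk q q.edges (fun e he => he)
  obtain ⟨x, x', hx, he⟩ := cross (S := Set.univ)
    (fun a b h => h.1) (fun a b _ => ⟨trivial, trivial⟩) hchain hnot
  exact he ▸ hx.2

lemma mem_support_cases {x y m : V} (q : G.Walk x y) (hm : m ∈ q.support) :
    m = x ∨ ∃ t, s(t, m) ∈ q.edges := by
  induction q with
  | nil => simp at hm; exact Or.inl hm
  | @cons a c b h r ih =>
      rw [SimpleGraph.Walk.support_cons, List.mem_cons] at hm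
      rcases hm with hm | hm
      · exact Or.inl hm
      · rcases ih hm with rfl | ⟨t, ht⟩
        · exact Or.inr ⟨a, by simp [SimpleGraph.Walk.edges_cons]⟩
        · exact Or.inr ⟨t, by simp [SimpleGraph.Walk.edges_cons, ht]⟩

lemma conn_of_walk_in {P : Set V} {x y : V} (q : G.Walk x y)
    (h : ∀ m ∈ q.support, m ∈ P) :
    Relation.ReflTransGen (Stp G P) x y := by
  induction q with
  | nil => exact Relation.ReflTransGen.refl
  | @cons a c b hadj r ih =>
      refine Relation.ReflTransGen.head
        ⟨h _ (by simp [SimpleGraph.Walk.support_cons]),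
         h _ (by simp [SimpleGraph.Walk.support_cons, SimpleGraph.Walk.start_mem_support]), hadj⟩
        (ih fun m hm => h m (by simp [SimpleGraph.Walk.support_cons, hm]))

lemma deg_start {x y m : V} {h : G.Adj x m} {r : G.Walk m y}
    (hq : (SimpleGraph.Walk.cons h r).IsPath) {w : V}
    (hw : s(x, w) ∈ (SimpleGraph.Walk.cons h r).edges) : w = m := by
  rw [SimpleGraph.Walk.edges_cons, List.mem_cons] at hw
  rcases hw with hw | hw
  · rw [Sym2.eq_iff] at hw
    rcases hw with ⟨-, rfl⟩ | ⟨rfl, rfl⟩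
    · rfl
    · exact absurd rfl h.ne
  · have := SimpleGraph.Walk.fst_mem_support_of_mem_edges r hw
    rw [SimpleGraph.Walk.cons_isPath_iff] at hq
    exact absurd this hq.2

lemma deg_two {x y : V} (q : G.Walk x y) (hq : q.IsPath) (v : V) :
    ∃ n₁ n₂, ∀ w, s(v, w) ∈ q.edges → w = n₁ ∨ w = n₂ := by
  induction q with
  | nil => exact ⟨v, v, by simp⟩
  | @cons a c b h r ih =>
      by_cases hva : v = a
      · subst hva
        exact ⟨c, c, fun w hw => Or.inl (deg_start hq hw)⟩
      · by_cases hvc : v = c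
        · subst hvc
          cases r with
          | nil => exact ⟨a, a, by
              intro w hw
              rw [SimpleGraph.Walk.edges_cons, List.mem_cons] at hw
              rcases hw with hw | hw
              · rw [Sym2.eq_iff] at hw
                rcases hw with ⟨rfl, -⟩ | ⟨-, rfl⟩
                · exact absurd rfl hva
                · exact Or.inl rfl
              · simp at hw⟩
          | @cons _ m _ h' r' =>
              refine ⟨a, m, fun w hw => ?_⟩
              rw [SimpleGraph.Walk.edges_cons, List.mem_cons] at hw
              rcases hw with hw | hw
              · rw [Sym2.eq_iff] at hw
                rcases hw with ⟨rfl, -⟩ | ⟨-, rfl⟩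
                · exact absurd rfl hva
                · exact Or.inl rfl
              · exact Or.inr (deg_start hq.of_cons hw)
        · obtain ⟨n₁, n₂, hn⟩ := ih hq.of_cons
          refine ⟨n₁, n₂, fun w hw => ?_⟩
          rw [SimpleGraph.Walk.edges_cons, List.mem_cons] at hw
          rcases hw with hw | hw
          · rw [Sym2.eq_iff] at hw
            rcases hw with ⟨rfl, -⟩ | ⟨rfl, rfl⟩
            · exact absurd rfl hva
            · exact absurd rfl hvc
          · exact hn w hw

section Tree

variable (hT : G.IsTree)
include hT

noncomputable def thePath (a b : V) : G.Walk a b := (hT.existsUnique_path a b).choose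

lemma thePath_isPath (a b : V) : (thePath hT a b).IsPath :=
  (hT.existsUnique_path a b).choose_spec.1

lemma thePath_unique {a b : V} (q : G.Walk a b) (hq : q.IsPath) : q = thePath hT a b :=
  (hT.existsUnique_path a b).choose_spec.2 q hq

lemma thePath_adj {u w : V} (h : G.Adj u w) :
    thePath hT u w = SimpleGraph.Walk.cons h SimpleGraph.Walk.nil := by
  symm
  apply thePath_unique
  rw [SimpleGraph.Walk.cons_isPath_iff]
  exact ⟨SimpleGraph.Walk.IsPath.nil, by simp [h.ne]⟩

/-- separation: an edge of a path separates its endpoints -/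
lemma path_edge_sep {a b : V} {q : G.Walk a b} (hq : q.IsPath) {e : Sym2 V}
    (he : e ∈ q.edges) :
    ∃ z₀ y₀, G.Adj z₀ y₀ ∧ e = s(z₀, y₀) ∧ a ∉ Reg G Set.univ e y₀ ∧
      b ∈ Reg G Set.univ e y₀ := by
  induction q with
  | nil => simp at he
  | @cons x m y h r ih =>
      rw [SimpleGraph.Walk.edges_cons, List.mem_cons] at he
      rcases he with he | he
      · refine ⟨x, m, h, he, ?_, ?_⟩
        · rw [he]; exact tail_not_mem_reg hT.2 h
        · have hnod : s(x, m) ∉ r.edges := by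
            have := hq.edges_nodup
            rw [SimpleGraph.Walk.edges_cons] at this
            exact (List.nodup_cons.mp this).1
          rw [he]
          exact reg_univ_of_walk_avoid r hnod
      · obtain ⟨z₀, y₀, h1, h2, h3, h4⟩ := ih hq.of_cons he
        refine ⟨z₀, y₀, h1, h2, ?_, h4⟩
        have hne : s(x, m) ≠ e := by
          intro hh
          have := hq.edges_nodup
          rw [SimpleGraph.Walk.edges_cons] at this
          exact (List.nodup_cons.mp this).1 (hh ▸ he)
        intro hx
        exact h3 ((reg_univ_iff_step h hne).mp hx)

/-- subpath property in trees: the path between two vertices of a walk `p` has its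
edges among the edges of `p`. -/
lemma thePath_edges_subset {a b u w : V} {p : G.Walk a b}
    (hu : u ∈ p.support) (hw : w ∈ p.support) :
    ∀ e ∈ (thePath hT u w).edges, e ∈ p.edges := by
  intro e he
  obtain ⟨z₀, y₀, h1, h2, h3, h4⟩ := path_edge_sep hT (thePath_isPath hT u w) he
  have hnot : ¬ (u ∈ Reg G Set.univ e y₀ ↔ w ∈ Reg G Set.univ e y₀) := by
    intro hiff; exact h3 (hiff.mpr h4)
  have hcr := walk_cross (q := (p.takeUntil u hu).reverse.append (p.takeUntil w hw)) hnot
  rw [SimpleGraph.Walk.edges_append, List.mem_append, SimpleGraph.Walk.edges_reverse,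
    List.mem_reverse] at hcr
  rcases hcr with hcr | hcr
  · exact SimpleGraph.Walk.edges_takeUntil_subset p hu hcr
  · exact SimpleGraph.Walk.edges_takeUntil_subset p hw hcr

lemma adj_mem_edges {a b u w : V} {p : G.Walk a b}
    (hu : u ∈ p.support) (hw : w ∈ p.support) (h : G.Adj u w) : s(u, w) ∈ p.edges := by
  apply thePath_edges_subset hT hu hw
  rw [thePath_adj hT h]
  simp

lemma supp_thePath_subset_cmp {S : Set V} {a₀ a b : V}
    (ha : a ∈ Cmp G S a₀) (hb : b ∈ Cmp G S a₀) :
    ∀ m ∈ (thePath hT a b).support, m ∈ Cmp G S a₀ := by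
  intro m hm
  rcases mem_support_cases _ hm with rfl | ⟨t, ht⟩
  · exact ha
  · obtain ⟨z₀, y₀, h1, h2, h3, h4⟩ := path_edge_sep hT (thePath_isPath hT a b) ht
    have hchain : Relation.ReflTransGen (Stp G (Cmp G S a₀)) a b :=
      conn_in_cmp ha (conn_trans (conn_symm ha) hb)
    obtain ⟨x, x', hx, he⟩ := cross (S := Set.univ) (fun p q h => h.2.2)
      (fun p q _ => ⟨trivial, trivial⟩) hchain (fun hiff => h3 (hiff.mpr h4))
    rw [Sym2.eq_iff] at he
    rcases he with ⟨-, rfl⟩ | ⟨rfl, -⟩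
    · exact hx.2.1
    · exact hx.1

lemma takeUntil_eq_thePath {a b z : V} (hz : z ∈ (thePath hT a b).support) :
    (thePath hT a b).takeUntil z hz = thePath hT a z :=
  thePath_unique hT _ ((thePath_isPath hT a b).takeUntil hz)

lemma dropUntil_eq_thePath {a b z : V} (hz : z ∈ (thePath hT a b).support) :
    (thePath hT a b).dropUntil z hz = thePath hT z b :=
  thePath_unique hT _ ((thePath_isPath hT a b).dropUntil hz)

lemma thePath_support_concat {a z y : V} (h : G.Adj z y)
    (hy : y ∉ (thePath hT a z).support) :
    (thePath hT a y).support = (thePath hT a z).support ++ [y] := by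
  have hpath : ((thePath hT a z).concat h).IsPath := by
    apply SimpleGraph.Walk.IsPath.mk'
    rw [SimpleGraph.Walk.support_concat]
    rw [List.nodup_append]
    refine ⟨(thePath_isPath hT a z).support_nodup, List.nodup_singleton y, ?_⟩
    intro m hm w hw hmw
    rw [List.mem_singleton] at hw
    subst hw
    exact hy (hmw ▸ hm)
  rw [← thePath_unique hT _ hpath, SimpleGraph.Walk.support_concat]

lemma thePath_support_cons {z b y : V} (h : G.Adj y z)
    (hy : y ∉ (thePath hT z b).support) :
    (thePath hT y b).support = y :: (thePath hT z b).support := by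
  have hpath : (SimpleGraph.Walk.cons h (thePath hT z b)).IsPath := by
    rw [SimpleGraph.Walk.cons_isPath_iff]
    exact ⟨thePath_isPath hT z b, hy⟩
  rw [← thePath_unique hT _ hpath, SimpleGraph.Walk.support_cons]

end Tree

/-! ### side utilities -/

lemma opp_side (hT : G.IsTree) {S : Set V} {a₀ : V} {z y v : V}
    (hy : y ∈ Cmp G S a₀) (hzy : G.Adj z y)
    (hv : v ∈ Cmp G S a₀) (hvn : v ∉ Reg G (Cmp G S a₀) s(z, y) y) :
    v ∉ Reg G Set.univ s(z, y) y := by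
  intro hvu
  have h1 : v ∈ Reg G (Cmp G S a₀) s(z, y) z := compl_reg hy hzy hv hvn
  have h2 : v ∈ Reg G Set.univ s(z, y) z := reg_mono (Set.subset_univ _) h1
  exact sides_disjoint hT.2 hzy ⟨hvu, h2⟩

/-! ### covering families -/

section Family

variable {ι : Type*} (Fam : ι → G.Subgraph)

/-- the family member `i` has an edge incident to the set `C` -/
def Touches (i : ι) (C : Set V) : Prop := ∃ x ∈ C, ∃ w, (Fam i).Adj x w

lemma touches_mono {i : ι} {C C' : Set V} (h : C ⊆ C') (ht : Touches Fam i C) :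
    Touches Fam i C' := by
  obtain ⟨x, hx, w, hw⟩ := ht
  exact ⟨x, h hx, w, hw⟩

lemma subgraph_chain {i : ι} (hconn : (Fam i).Connected) {x y : V}
    (hx : x ∈ (Fam i).verts) (hy : y ∈ (Fam i).verts) :
    Relation.ReflTransGen (fun a b => (Fam i).Adj a b) x y := by
  obtain ⟨w⟩ := hconn.coe ⟨x, hx⟩ ⟨y, hy⟩
  have : ∀ (u v : (Fam i).verts) (q : (Fam i).coe.Walk u v),
      Relation.ReflTransGen (fun a b => (Fam i).Adj a b) u.1 v.1 := by
    intro u v q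
    induction q with
    | nil => exact Relation.ReflTransGen.refl
    | cons h r ih => exact Relation.ReflTransGen.head h ih
  exact this _ _ w

/-- a connected subgraph with vertices on both sides of `e` contains `e` -/
lemma subgraph_edge_of_sides {i : ι} (hconn : (Fam i).Connected) {x y : V}
    (hx : x ∈ (Fam i).verts) (hy : y ∈ (Fam i).verts) {e : Sym2 V} {y₀ : V}
    (hside : ¬ (x ∈ Reg G Set.univ e y₀ ↔ y ∈ Reg G Set.univ e y₀)) :
    e ∈ (Fam i).edgeSet := by
  obtain ⟨a, b, hab, he⟩ := cross (S := Set.univ)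
    (fun a b h => (Fam i).adj_sub h) (fun a b _ => ⟨trivial, trivial⟩)
    (subgraph_chain Fam hconn hx hy) hside
  rw [← SimpleGraph.Subgraph.mem_edgeSet] at *
  exact he ▸ hab

end Family

/-! ### the one-arm helper for the extremal argument -/

lemma exists_cons_of_ne {x y : V} (q : G.Walk x y) (hne : x ≠ y) :
    ∃ (m : V) (h : G.Adj x m) (r : G.Walk m y), q = SimpleGraph.Walk.cons h r := by
  cases q with
  | nil => exact absurd rfl hne
  | cons h r => exact ⟨_, h, r, rfl⟩

lemma side_helper (hT : G.IsTree) {ι : Type*} (Fam : ι → G.Subgraph)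
    (hFc : ∀ i, (Fam i).Connected)
    {S : Set V} {a₀ : V} {z y aend : V}
    (hzK : z ∈ Cmp G S a₀) (hyK : y ∈ Cmp G S a₀) (hzy : G.Adj z y)
    (hbadzy : ∀ i, Touches Fam i (Cmp G S a₀) →
      Touches Fam i (Reg G (Cmp G S a₀) s(z, y) y))
    (hRdisj : ∀ m ∈ (thePath hT z aend).support, m ∉ Reg G (Cmp G S a₀) s(z, y) y)
    (hyarm : y ∉ (thePath hT z aend).support)
    {t u : V} (htu : G.Adj t u) (huK : u ∈ Cmp G S a₀)
    (hbadtu : ∀ i, Touches Fam i (Cmp G S a₀) →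
      Touches Fam i (Reg G (Cmp G S a₀) s(t, u) u))
    {w₁ : V} (hw₁ : w₁ ∈ (thePath hT z aend).support)
    (hw₁R : w₁ ∈ Reg G (Cmp G S a₀) s(t, u) u)
    (hzR₁ : z ∉ Reg G (Cmp G S a₀) s(t, u) u)
    (hyR₁ : y ∉ Reg G (Cmp G S a₀) s(t, u) u) :
    ∃ a₁, G.Adj z a₁ ∧ s(z, a₁) ∈ (thePath hT z aend).edges ∧
      (∀ i, Touches Fam i (Cmp G S a₀) → (Fam i).Adj z y ∧ (Fam i).Adj z a₁) := by
  set K := Cmp G S a₀ with hKdef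
  set R := Reg G K s(z, y) y with hRdef
  set R₁ := Reg G K s(t, u) u with hR₁def
  set parm := thePath hT z aend with hparm
  -- step 1
  have hw₁z : w₁ ≠ z := fun h => hzR₁ (h ▸ hw₁R)
  -- step 2 : the edge s(t,u) is on the path from z to w₁
  have hzU₁ : z ∉ Reg G Set.univ s(t, u) u := opp_side hT huK htu hzK hzR₁
  have hw₁U₁ : w₁ ∈ Reg G Set.univ s(t, u) u := reg_mono (Set.subset_univ _) hw₁R
  have he₁mem : s(t, u) ∈ (thePath hT z w₁).edges :=
    walk_cross _ (fun hiff => hzU₁ (hiff.mpr hw₁U₁))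
  -- step 3
  have hsub : ∀ e ∈ (thePath hT z w₁).edges, e ∈ parm.edges :=
    thePath_edges_subset hT (SimpleGraph.Walk.start_mem_support parm) hw₁
  -- step 4
  have he₁parm : s(t, u) ∈ parm.edges := hsub _ he₁mem
  have htP : t ∈ parm.support := SimpleGraph.Walk.fst_mem_support_of_mem_edges parm he₁parm
  -- step 5
  obtain ⟨a₁, hadj, r_m, heq⟩ := exists_cons_of_ne (thePath hT z w₁) (Ne.symm hw₁z)
  -- step 6
  have hε₁mem : s(z, a₁) ∈ (thePath hT z w₁).edges := by
    rw [heq, SimpleGraph.Walk.edges_cons]; exact List.mem_cons_self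
  have hε₁parm : s(z, a₁) ∈ parm.edges := hsub _ hε₁mem
  have ha₁P : a₁ ∈ parm.support := SimpleGraph.Walk.snd_mem_support_of_mem_edges parm hε₁parm
  -- step 7
  have huz : u ≠ z := fun h => hzR₁ (h ▸ reg_mem_self)
  -- step 8 : u is on the a₁ side of the edge s(z,a₁)
  have hu_side : u ∈ Reg G Set.univ s(z, a₁) a₁ := by
    have huPzw : u ∈ (thePath hT z w₁).support :=
      SimpleGraph.Walk.snd_mem_support_of_mem_edges _ he₁mem
    rw [heq, SimpleGraph.Walk.support_cons, List.mem_cons] at huPzw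
    rcases huPzw with h | h
    · exact absurd h huz
    · have hnod : s(z, a₁) ∉ r_m.edges := by
        have hnd := (thePath_isPath hT z w₁).edges_nodup
        rw [heq, SimpleGraph.Walk.edges_cons] at hnd
        exact (List.nodup_cons.mp hnd).1
      have := SimpleGraph.Walk.edges_takeUntil_subset r_m h
      exact reg_univ_of_walk_avoid (r_m.takeUntil u h) (fun hc => hnod (this hc))
  -- step 9 : y is on the z side of the edge s(z,a₁)
  have hya₁ : y ≠ a₁ := fun h => hyarm (h ▸ ha₁P)
  have hy_side : y ∉ Reg G Set.univ s(z, a₁) a₁ := by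
    have h1 : s(z, y) ≠ s(z, a₁) := by
      intro hcontra
      rw [Sym2.eq_iff] at hcontra
      rcases hcontra with ⟨-, h⟩ | ⟨h1', h2'⟩
      · exact hya₁ h
      · exact hzy.ne h2'.symm
    have h2 : y ∈ Reg G Set.univ s(z, a₁) z :=
      Relation.ReflTransGen.single ⟨trivial, trivial, hzy, h1⟩
    exact fun hy' => sides_disjoint hT.2 hadj ⟨hy', h2⟩
  -- step 10 : the regions R and R₁ are disjoint
  have hdisj : ∀ v, v ∈ R → v ∈ R₁ → False := by
    intro v hvR hvR₁
    have hchain : Relation.ReflTransGen (StpA G K s(z, y)) v y :=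
      (@Relation.ReflTransGen.symmetric _ _ ⟨fun a b h => stpA_symm h⟩).symm _ _ hvR
    rcases first_use_gen (e := s(t, u)) hchain with h1 | ⟨x, x', h1, h2, h3, h4⟩
    · -- the chain avoids s(t,u) entirely, so y ∈ R₁
      have : Relation.ReflTransGen (StpA G K s(t, u)) v y :=
        Relation.ReflTransGen.mono (fun a b hab => ⟨hab.1.1, hab.1.2.1, hab.1.2.2.1, hab.2⟩) _ _ h1
      exact hyR₁ (reg_closed this hvR₁)
    · have hxR₁ : x ∈ R₁ := by
        have : Relation.ReflTransGen (StpA G K s(t, u)) v x :=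
          Relation.ReflTransGen.mono (fun a b hab => ⟨hab.1.1, hab.1.2.1, hab.1.2.2.1, hab.2⟩) _ _ h1
        exact reg_closed this hvR₁
      rw [Sym2.eq_iff] at h3
      rcases h3 with ⟨h3a, h3b⟩ | ⟨h3a, h3b⟩
      · -- x = t would be on the wrong side
        have : t ∉ R₁ := by
          intro ht
          exact tail_not_mem_reg hT.2 htu (reg_mono (Set.subset_univ _) ht)
        exact this (h3a ▸ hxR₁)
      · -- suffix: a chain from t to y avoiding s(z,y), hence t ∈ R, contradiction
        have htR : t ∈ R := reg_closed' (h3b ▸ h4) reg_mem_self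
        exact hRdisj t htP htR
  -- step 11 : fullness
  refine ⟨a₁, hadj, hε₁parm, ?_⟩
  intro i hi
  obtain ⟨xi, hxiR, wi, hwi⟩ := hbadzy i hi
  obtain ⟨x'i, hx'iR₁, w'i, hw'i⟩ := hbadtu i hi
  have hxiv : xi ∈ (Fam i).verts := (Fam i).edge_vert hwi
  have hx'iv : x'i ∈ (Fam i).verts := (Fam i).edge_vert hw'i
  have hxiK : xi ∈ K := reg_subset hyK hxiR
  have hx'iK : x'i ∈ K := reg_subset huK hx'iR₁
  -- d-fullness
  have hdedge : (Fam i).Adj z y := by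
    have h1 : xi ∈ Reg G Set.univ s(z, y) y := reg_mono (Set.subset_univ _) hxiR
    have h2 : x'i ∉ Reg G Set.univ s(z, y) y := by
      have : x'i ∉ R := fun hc => hdisj x'i hc hx'iR₁
      exact opp_side hT hyK hzy hx'iK this
    have := subgraph_edge_of_sides Fam (hFc i) hxiv hx'iv
      (e := s(z, y)) (y₀ := y) (fun hiff => h2 (hiff.mp h1))
    exact (SimpleGraph.Subgraph.mem_edgeSet).mp this
  -- e₁-fullness
  have he₁edge : (Fam i).Adj t u := by
    have h1 : x'i ∈ Reg G Set.univ s(t, u) u := reg_mono (Set.subset_univ _) hx'iR₁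
    have h2 : xi ∉ Reg G Set.univ s(t, u) u := by
      have : xi ∉ R₁ := fun hc => hdisj xi hxiR hc
      exact opp_side hT huK htu hxiK this
    have := subgraph_edge_of_sides Fam (hFc i) hx'iv hxiv
      (e := s(t, u)) (y₀ := u) (fun hiff => h2 (hiff.mp h1))
    exact (SimpleGraph.Subgraph.mem_edgeSet).mp this
  have hyv : y ∈ (Fam i).verts := (Fam i).edge_vert hdedge.symm
  have huv : u ∈ (Fam i).verts := (Fam i).edge_vert he₁edge.symm
  -- ε₁-fullness
  have hεedge : (Fam i).Adj z a₁ := by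
    have := subgraph_edge_of_sides Fam (hFc i) huv hyv
      (e := s(z, a₁)) (y₀ := a₁) (fun hiff => hy_side (hiff.mp hu_side))
    exact (SimpleGraph.Subgraph.mem_edgeSet).mp this
  exact ⟨hdedge, hεedge⟩

/-! ### the core lemma: a good path in every component -/

lemma core [Fintype V] (hT : G.IsTree)
    (hdeg : ∀ v : V, (G.neighborSet v).ncard ≠ 1 → 4 ≤ (G.neighborSet v).ncard)
    {ι : Type*} (Fam : ι → G.Subgraph)
    (hFc : ∀ i, (Fam i).Connected)
    (hF3 : ∀ i, ∀ v : V, ((Fam i).neighborSet v).ncard ≤ 3)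
    (hcov : ∀ x y : V, G.Adj x y → ∃ i, (Fam i).Adj x y)
    (S : Set V) (a₀ : V) :
    ∃ P : Set V, P.Nonempty ∧ P ⊆ Cmp G S a₀ ∧
      (∀ v ∈ P, {w | w ∈ P ∧ G.Adj v w}.ncard ≤ 2) ∧
      (∀ a ∈ P, ∀ b ∈ P, Relation.ReflTransGen (Stp G P) a b) ∧
      (∀ z y, z ∈ P → y ∉ P → G.Adj z y → y ∈ Cmp G S a₀ →
        ∃ i, Touches Fam i (Cmp G S a₀) ∧
          ¬ Touches Fam i (Reg G (Cmp G S a₀) s(z, y) y)) := by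
  classical
  set K := Cmp G S a₀ with hK
  set Bad : V × V → Prop := fun q => q.1 ∈ K ∧ q.2 ∈ K ∧ G.Adj q.1 q.2 ∧
      (∀ i, Touches Fam i K → Touches Fam i (Reg G K s(q.1, q.2) q.2)) with hBad
  set A : V → V → Finset (V × V) := fun a b =>
      Finset.univ.filter (fun q => Bad q ∧
        ∃ m ∈ (thePath hT a b).support, m ∈ Reg G K s(q.1, q.2) q.2) with hA
  have hSKne : (Finset.univ.filter (fun ab : V × V => ab.1 ∈ K ∧ ab.2 ∈ K)).Nonempty :=
    ⟨(a₀, a₀), by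
      rw [Finset.mem_filter]
      exact ⟨Finset.mem_univ _, mem_cmp_self, mem_cmp_self⟩⟩
  obtain ⟨ab, habmem, hmax⟩ := Finset.exists_max_image _
    (fun ab : V × V => (A ab.1 ab.2).card) hSKne
  rw [Finset.mem_filter] at habmem
  obtain ⟨-, haK, hbK⟩ := habmem
  set p := thePath hT ab.1 ab.2 with hp
  have hPsub : ∀ v ∈ {v | v ∈ p.support}, v ∈ K := by
    intro v hv
    exact supp_thePath_subset_cmp hT haK hbK v hv
  refine ⟨{v | v ∈ p.support}, ⟨ab.1, by
      simp only [Set.mem_setOf_eq]; exact SimpleGraph.Walk.start_mem_support p⟩,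
    hPsub, ?_, ?_, ?_⟩
  · -- degrees at most two
    intro v hv
    obtain ⟨n₁, n₂, hn⟩ := deg_two p (thePath_isPath hT ab.1 ab.2) v
    have hsubset : {w | w ∈ {v | v ∈ p.support} ∧ G.Adj v w} ⊆ {n₁, n₂} := by
      rintro w ⟨hwP, hadj⟩
      exact hn w (adj_mem_edges hT hv hwP hadj)
    refine le_trans (Set.ncard_le_ncard hsubset (Set.toFinite _)) ?_
    refine le_trans (Set.ncard_insert_le _ _) ?_
    simp [Set.ncard_singleton]
  · -- path-connectivity inside the support
    intro a ha b hb
    refine conn_of_walk_in (thePath hT a b) ?_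
    intro m hm
    rcases mem_support_cases _ hm with rfl | ⟨t, ht⟩
    · exact ha
    · have := thePath_edges_subset hT ha hb _ ht
      simp only [Set.mem_setOf_eq]
      exact SimpleGraph.Walk.snd_mem_support_of_mem_edges p this
  · -- the hanging condition
    intro z y hzP hyP hzy hyK
    by_contra hcon
    push_neg at hcon
    have hzK : z ∈ K := hPsub z hzP
    have hbadq : Bad (z, y) := ⟨hzK, hyK, hzy, hcon⟩
    have hzsup : z ∈ p.support := hzP
    have hysup : y ∉ p.support := hyP
    -- the region of the hanging edge misses the whole path
    have hunmet : ∀ m ∈ p.support, m ∉ Reg G K s(z, y) y := by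
      intro w hw hwR
      have h1 : z ∉ Reg G Set.univ s(z, y) y := tail_not_mem_reg hT.2 hzy
      have h2 : w ∈ Reg G Set.univ s(z, y) y := reg_mono (Set.subset_univ _) hwR
      have h3 : s(z, y) ∈ (thePath hT w z).edges :=
        walk_cross _ (fun hiff => h1 (hiff.mp h2))
      have h4 : s(z, y) ∈ p.edges := thePath_edges_subset hT hw hzsup _ h3
      exact hysup (SimpleGraph.Walk.snd_mem_support_of_mem_edges p h4)
    -- useful: strict growth of the met-set yields a contradiction with maximality
    have hgrow2 : ∀ (a b : V), a ∈ K → b ∈ K → y ∈ (thePath hT a b).support →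
        (A ab.1 ab.2 ⊆ A a b) → False := by
      intro a b haK' hbK' hymem hsub
      have hss : A ab.1 ab.2 ⊂ A a b := by
        refine ⟨hsub, fun hsub' => ?_⟩
        have hzyA : (z, y) ∈ A a b := by
          rw [hA, Finset.mem_filter]
          exact ⟨Finset.mem_univ _, hbadq, y, hymem, reg_mem_self⟩
        have := hsub' hzyA
        rw [hA, Finset.mem_filter] at this
        obtain ⟨-, -, m, hm1, hm2⟩ := this
        exact hunmet m hm1 hm2
      have hlt := Finset.card_lt_card hss
      have hle := hmax (a, b) (by simp [Finset.mem_filter, haK', hbK'])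
      simp only at hle
      omega
    -- CASE z = ab.2 : extend the path beyond its end
    rcases eq_or_ne z ab.2 with rfl | hzb
    · have hsupp' : (thePath hT ab.1 y).support = p.support ++ [y] :=
        thePath_support_concat hT hzy hysup
      refine hgrow2 ab.1 y haK hyK (by rw [hsupp']; simp) ?_
      intro q hq
      rw [hA, Finset.mem_filter] at hq ⊢
      obtain ⟨h1, h2, m, hm1, hm2⟩ := hq
      exact ⟨h1, h2, m, by rw [hsupp']; exact List.mem_append_left _ hm1, hm2⟩
    rcases eq_or_ne z ab.1 with rfl | hza
    · have hsupp' : (thePath hT y ab.2).support = y :: p.support :=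
        thePath_support_cons hT hzy.symm hysup
      refine hgrow2 y ab.2 hyK hbK (by rw [hsupp']; simp) ?_
      intro q hq
      rw [hA, Finset.mem_filter] at hq ⊢
      obtain ⟨h1, h2, m, hm1, hm2⟩ := hq
      exact ⟨h1, h2, m, by rw [hsupp']; exact List.mem_cons_of_mem _ hm1, hm2⟩
    -- INTERIOR CASE
    have hp₁path : p.takeUntil z hzsup = thePath hT ab.1 z := takeUntil_eq_thePath hT hzsup
    have hp₂path : p.dropUntil z hzsup = thePath hT z ab.2 := dropUntil_eq_thePath hT hzsup
    have hsupmem : ∀ m, m ∈ p.support ↔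
        (m ∈ (thePath hT ab.1 z).support ∨ m ∈ (thePath hT z ab.2).support) := by
      intro m
      have hspec := p.take_spec hzsup
      have h := SimpleGraph.Walk.mem_support_append_iff
        (t := m) (p.takeUntil z hzsup) (p.dropUntil z hzsup)
      rw [hspec, hp₁path, hp₂path] at h
      exact h
    have hyp₁ : y ∉ (thePath hT ab.1 z).support := fun h => hysup ((hsupmem y).mpr (Or.inl h))
    have hyp₂ : y ∉ (thePath hT z ab.2).support := fun h => hysup ((hsupmem y).mpr (Or.inr h))
    have hsupp₁' : (thePath hT ab.1 y).support = (thePath hT ab.1 z).support ++ [y] :=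
      thePath_support_concat hT hzy hyp₁
    have hsupp₂' : (thePath hT y ab.2).support = y :: (thePath hT z ab.2).support :=
      thePath_support_cons hT hzy.symm hyp₂
    -- lost pairs for the two swaps
    have hlost₂ : ∃ q : V × V, Bad q ∧
        (∃ m ∈ p.support, m ∈ Reg G K s(q.1, q.2) q.2) ∧
        (∀ m ∈ (thePath hT ab.1 y).support, m ∉ Reg G K s(q.1, q.2) q.2) := by
      by_contra hno
      push_neg at hno
      refine hgrow2 ab.1 y haK hyK (by rw [hsupp₁']; simp) ?_
      intro q hq
      rw [hA, Finset.mem_filter] at hq ⊢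
      obtain ⟨h1, h2, hm⟩ := hq
      obtain ⟨m, hm1, hm2⟩ := hno q h2 hm
      exact ⟨h1, h2, m, hm1, hm2⟩
    have hlost₁ : ∃ q : V × V, Bad q ∧
        (∃ m ∈ p.support, m ∈ Reg G K s(q.1, q.2) q.2) ∧
        (∀ m ∈ (thePath hT y ab.2).support, m ∉ Reg G K s(q.1, q.2) q.2) := by
      by_contra hno
      push_neg at hno
      refine hgrow2 y ab.2 hyK hbK (by rw [hsupp₂']; simp) ?_
      intro q hq
      rw [hA, Finset.mem_filter] at hq ⊢
      obtain ⟨h1, h2, hm⟩ := hq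
      obtain ⟨m, hm1, hm2⟩ := hno q h2 hm
      exact ⟨h1, h2, m, hm1, hm2⟩
    obtain ⟨⟨t₁, u₁⟩, hbad₁, ⟨w₁, hw₁p, hw₁R⟩, hunmet₁⟩ := hlost₁
    obtain ⟨⟨t₂, u₂⟩, hbad₂, ⟨w₂, hw₂p, hw₂R⟩, hunmet₂⟩ := hlost₂
    -- arm 1 : towards ab.1
    have hzR₁ : z ∉ Reg G K s(t₁, u₁) u₁ :=
      hunmet₁ z (by
        rw [hsupp₂']
        exact List.mem_cons_of_mem _ (SimpleGraph.Walk.start_mem_support _))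
    have hyR₁ : y ∉ Reg G K s(t₁, u₁) u₁ :=
      hunmet₁ y (by rw [hsupp₂']; exact List.mem_cons_self)
    have hw₁arm : w₁ ∈ (thePath hT ab.1 z).support := by
      rcases (hsupmem w₁).mp hw₁p with h | h
      · exact h
      · exact absurd hw₁R (hunmet₁ w₁ (by rw [hsupp₂']; exact List.mem_cons_of_mem _ h))
    have hrev : (thePath hT ab.1 z).reverse = thePath hT z ab.1 :=
      thePath_unique hT _ ((thePath_isPath hT ab.1 z).reverse)
    have hw₁arm' : w₁ ∈ (thePath hT z ab.1).support := by
      rw [← hrev, SimpleGraph.Walk.support_reverse, List.mem_reverse]; exact hw₁arm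
    have hRdisj₁ : ∀ m ∈ (thePath hT z ab.1).support, m ∉ Reg G K s(z, y) y := by
      intro m hm
      rw [← hrev, SimpleGraph.Walk.support_reverse, List.mem_reverse] at hm
      exact hunmet m ((hsupmem m).mpr (Or.inl hm))
    have hyarm₁ : y ∉ (thePath hT z ab.1).support := by
      rw [← hrev, SimpleGraph.Walk.support_reverse, List.mem_reverse]; exact hyp₁
    obtain ⟨a₁, hadj₁, he₁, hfull₁⟩ := side_helper hT Fam hFc hzK hyK hzy hcon hRdisj₁ hyarm₁
      hbad₁.2.2.1 hbad₁.2.1 hbad₁.2.2.2 hw₁arm' hw₁R hzR₁ hyR₁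
    -- arm 2 : towards ab.2
    have hzR₂ : z ∉ Reg G K s(t₂, u₂) u₂ :=
      hunmet₂ z (by
        rw [hsupp₁']
        exact List.mem_append_left _ (SimpleGraph.Walk.end_mem_support _))
    have hyR₂ : y ∉ Reg G K s(t₂, u₂) u₂ :=
      hunmet₂ y (by rw [hsupp₁']; simp)
    have hw₂arm : w₂ ∈ (thePath hT z ab.2).support := by
      rcases (hsupmem w₂).mp hw₂p with h | h
      · exact absurd hw₂R (hunmet₂ w₂ (by rw [hsupp₁']; exact List.mem_append_left _ h))
      · exact h
    have hRdisj₂ : ∀ m ∈ (thePath hT z ab.2).support, m ∉ Reg G K s(z, y) y :=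
      fun m hm => hunmet m ((hsupmem m).mpr (Or.inr hm))
    obtain ⟨b₁, hadj₂, he₂, hfull₂⟩ := side_helper hT Fam hFc hzK hyK hzy hcon hRdisj₂ hyp₂
      hbad₂.2.2.1 hbad₂.2.1 hbad₂.2.2.2 hw₂arm hw₂R hzR₂ hyR₂
    -- locations of a₁ and b₁
    have he₁' : s(z, a₁) ∈ (thePath hT ab.1 z).edges := by
      rw [← hrev, SimpleGraph.Walk.edges_reverse, List.mem_reverse] at he₁
      exact he₁
    have he₁p : s(z, a₁) ∈ p.edges := by
      rw [← hp₁path] at he₁'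
      exact SimpleGraph.Walk.edges_takeUntil_subset p hzsup he₁'
    have he₂p : s(z, b₁) ∈ p.edges := by
      rw [← hp₂path] at he₂
      exact SimpleGraph.Walk.edges_dropUntil_subset p hzsup he₂
    have ha₁p : a₁ ∈ p.support := SimpleGraph.Walk.snd_mem_support_of_mem_edges p he₁p
    have hb₁p : b₁ ∈ p.support := SimpleGraph.Walk.snd_mem_support_of_mem_edges p he₂p
    have hya₁ : y ≠ a₁ := fun h => hysup (h ▸ ha₁p)
    have hyb₁ : y ≠ b₁ := fun h => hysup (h ▸ hb₁p)
    have ha₁b₁ : a₁ ≠ b₁ := by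
      intro h
      have hnd := (thePath_isPath hT ab.1 ab.2).edges_nodup
      have hspec := p.take_spec hzsup
      have hedges : p.edges = (p.takeUntil z hzsup).edges ++ (p.dropUntil z hzsup).edges := by
        conv_lhs => rw [← hspec]
        exact SimpleGraph.Walk.edges_append _ _
      rw [show p.edges = (thePath hT ab.1 ab.2).edges from rfl] at hedges
      rw [hedges] at hnd
      have hdisjl := List.disjoint_of_nodup_append hnd
      refine hdisjl (a := s(z, a₁)) ?_ ?_
      · rw [hp₁path]; exact he₁'
      · rw [hp₂path, h]; exact he₂
    -- the degree count at z
    have hsub3 : ({y, a₁, b₁} : Set V) ⊆ G.neighborSet z := by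
      intro w hw
      simp only [Set.mem_insert_iff, Set.mem_singleton_iff] at hw
      rcases hw with rfl | rfl | rfl
      · exact hzy
      · exact hadj₁
      · exact hadj₂
    have h3 : ({y, a₁, b₁} : Set V).ncard = 3 := by
      rw [Set.ncard_insert_of_notMem (by simp [hya₁, hyb₁]),
        Set.ncard_insert_of_notMem (by simp [ha₁b₁]), Set.ncard_singleton]
    have h3le : 3 ≤ (G.neighborSet z).ncard := by
      calc 3 = ({y, a₁, b₁} : Set V).ncard := h3.symm
      _ ≤ _ := Set.ncard_le_ncard hsub3 (Set.toFinite _)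
    have h4le : 4 ≤ (G.neighborSet z).ncard := hdeg z (by omega)
    obtain ⟨w₄, hw₄, hw₄ne⟩ : ∃ w₄ ∈ G.neighborSet z, w₄ ∉ ({y, a₁, b₁} : Set V) := by
      by_contra hno
      push_neg at hno
      have := Set.ncard_le_ncard hno (Set.toFinite _)
      omega
    simp only [Set.mem_insert_iff, Set.mem_singleton_iff, not_or] at hw₄ne
    obtain ⟨hw4y, hw4a, hw4b⟩ := hw₄ne
    obtain ⟨i₀, hi₀⟩ := hcov z w₄ hw₄
    have hti₀ : Touches Fam i₀ K := ⟨z, hzK, w₄, hi₀⟩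
    obtain ⟨hfd, hfa₁⟩ := hfull₁ i₀ hti₀
    obtain ⟨-, hfb₁⟩ := hfull₂ i₀ hti₀
    have hsub4 : ({y, a₁, b₁, w₄} : Set V) ⊆ (Fam i₀).neighborSet z := by
      intro w hw
      simp only [Set.mem_insert_iff, Set.mem_singleton_iff] at hw
      rcases hw with rfl | rfl | rfl | rfl
      · exact hfd
      · exact hfa₁
      · exact hfb₁
      · exact hi₀
    have h4 : ({y, a₁, b₁, w₄} : Set V).ncard = 4 := by
      rw [Set.ncard_insert_of_notMem (by simp [hya₁, hyb₁, Ne.symm hw4y]),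
        Set.ncard_insert_of_notMem (by simp [ha₁b₁, Ne.symm hw4a]),
        Set.ncard_insert_of_notMem (by simp [Ne.symm hw4b]), Set.ncard_singleton]
    have hle4 : 4 ≤ ((Fam i₀).neighborSet z).ncard := by
      calc 4 = ({y, a₁, b₁, w₄} : Set V).ncard := h4.symm
      _ ≤ _ := Set.ncard_le_ncard hsub4 (Set.toFinite _)
    have := hF3 i₀ z
    omega

/-! ### first entry of a chain into a set -/

lemma first_enter_aux {Kset Q : Set V} {a b : V}
    (h : Relation.ReflTransGen (Stp G Kset) a b) (ha : a ∉ Q) :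
    (∃ y₀ z₀, Relation.ReflTransGen (Stp G (Kset \ Q)) a y₀ ∧ Stp G Kset y₀ z₀ ∧
      y₀ ∉ Q ∧ z₀ ∈ Q) ∨
    (Relation.ReflTransGen (Stp G (Kset \ Q)) a b ∧ b ∉ Q) := by
  induction h with
  | refl => exact Or.inr ⟨Relation.ReflTransGen.refl, ha⟩
  | @tail m c hm hmc ih =>
      rcases ih with h1 | ⟨h1, h2⟩
      · exact Or.inl h1
      · by_cases hcQ : c ∈ Q
        · exact Or.inl ⟨m, c, h1, hmc, h2, hcQ⟩
        · exact Or.inr ⟨h1.tail ⟨⟨hmc.1, h2⟩, ⟨hmc.2.1, hcQ⟩, hmc.2.2⟩, hcQ⟩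

lemma first_enter {Kset Q : Set V} {a b : V}
    (h : Relation.ReflTransGen (Stp G Kset) a b) (ha : a ∉ Q) (hb : b ∈ Q) :
    ∃ y₀ z₀, Relation.ReflTransGen (Stp G (Kset \ Q)) a y₀ ∧ Stp G Kset y₀ z₀ ∧
      y₀ ∉ Q ∧ z₀ ∈ Q := by
  rcases first_enter_aux h ha with h1 | ⟨-, h2⟩
  · exact h1
  · exact absurd hb h2

/-! ### the main induction -/

lemma main_lem [Fintype V] (hT : G.IsTree)
    (hdeg : ∀ v : V, (G.neighborSet v).ncard ≠ 1 → 4 ≤ (G.neighborSet v).ncard)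
    {ι : Type*} [Fintype ι] (Fam : ι → G.Subgraph)
    (hFc : ∀ i, (Fam i).Connected)
    (hF3 : ∀ i, ∀ v : V, ((Fam i).neighborSet v).ncard ≤ 3)
    (hcov : ∀ x y : V, G.Adj x y → ∃ i, (Fam i).Adj x y) :
    ∀ (k : ℕ) (S : Set V),
      (∀ a ∈ S, (Finset.univ.filter
        (fun i => Touches Fam i (Cmp G S a))).card ≤ k) →
      PwLE G k S := by
  intro k
  induction k with
  | zero =>
      intro S hcard
      show ∀ a ∈ S, ∀ b ∈ S, ¬ G.Adj a b
      intro a ha b hb hadj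
      obtain ⟨i, hi⟩ := hcov a b hadj
      have : i ∈ Finset.univ.filter (fun i => Touches Fam i (Cmp G S a)) := by
        rw [Finset.mem_filter]
        exact ⟨Finset.mem_univ _, a, mem_cmp_self, b, hi⟩
      have h1 : 0 < (Finset.univ.filter (fun i => Touches Fam i (Cmp G S a))).card :=
        Finset.card_pos.mpr ⟨i, this⟩
      have h2 := hcard a ha
      omega
  | succ k IH =>
      intro S hcard
      -- canonical choice of a good path for each component
      have hex : ∀ C : Set V, ∃ P : Set V,
          ∀ a₀, a₀ ∈ S → C = Cmp G S a₀ →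
            (P.Nonempty ∧ P ⊆ C ∧
              (∀ v ∈ P, {w | w ∈ P ∧ G.Adj v w}.ncard ≤ 2) ∧
              (∀ a ∈ P, ∀ b ∈ P, Relation.ReflTransGen (Stp G P) a b) ∧
              (∀ z y, z ∈ P → y ∉ P → G.Adj z y → y ∈ C →
                ∃ i, Touches Fam i C ∧ ¬ Touches Fam i (Reg G C s(z, y) y))) := by
        intro C
        by_cases hC : ∃ a₀, a₀ ∈ S ∧ C = Cmp G S a₀
        · obtain ⟨a₀, ha₀, rfl⟩ := hC
          obtain ⟨P, h1, h2, h3, h4, h5⟩ := core hT hdeg Fam hFc hF3 hcov S a₀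
          exact ⟨P, fun _ _ _ => ⟨h1, h2, h3, h4, h5⟩⟩
        · exact ⟨∅, fun a₀ ha₀ hC1 => absurd ⟨a₀, ha₀, hC1⟩ hC⟩
      choose f hf using hex
      set P := {v | v ∈ S ∧ v ∈ f (Cmp G S v)} with hPdef
      have hfK_mem : ∀ a ∈ S, ∀ x ∈ f (Cmp G S a), x ∈ P := by
        intro a ha x hx
        have hprops := hf (Cmp G S a) a ha rfl
        have hxK : x ∈ Cmp G S a := hprops.2.1 hx
        have hxS : x ∈ S := cmp_subset ha hxK
        have heq : Cmp G S x = Cmp G S a := (cmp_eq_of_conn hxK).symm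
        exact ⟨hxS, by rw [heq]; exact hx⟩
      show ∃ Q : Set V, Q ⊆ S ∧
        (∀ v ∈ Q, {w ∈ Q | G.Adj v w}.ncard ≤ 2) ∧
        (∀ a ∈ Q, ∀ b ∈ Q,
          Relation.ReflTransGen (fun x y => x ∈ S ∧ y ∈ S ∧ G.Adj x y) a b →
          Relation.ReflTransGen (fun x y => x ∈ Q ∧ y ∈ Q ∧ G.Adj x y) a b) ∧
        PwLE G k (S \ Q)
      refine ⟨P, fun v hv => hv.1, ?_, ?_, ?_⟩
      · -- degrees
        intro v hv
        have hprops := hf (Cmp G S v) v hv.1 rfl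
        have hsub : {w | w ∈ P ∧ G.Adj v w} ⊆ {w | w ∈ f (Cmp G S v) ∧ G.Adj v w} := by
          rintro w ⟨hwP, hadj⟩
          refine ⟨?_, hadj⟩
          have : Cmp G S w = Cmp G S v :=
            (cmp_eq_of_conn (Relation.ReflTransGen.single ⟨hv.1, hwP.1, hadj⟩)).symm
          rw [← this]
          exact hwP.2
        exact le_trans (Set.ncard_le_ncard hsub (Set.toFinite _))
          (hprops.2.2.1 v hv.2)
      · -- path-connectivity
        intro a ha b hb hconn
        have hK : Cmp G S b = Cmp G S a := (cmp_eq_of_conn hconn).symm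
        have hprops := hf (Cmp G S a) a ha.1 rfl
        have hbfK : b ∈ f (Cmp G S a) := by rw [← hK]; exact hb.2
        have hchain := hprops.2.2.2.1 a ha.2 b hbfK
        refine Relation.ReflTransGen.mono ?_ _ _ hchain
        intro x y hxy
        exact ⟨hfK_mem a ha.1 x hxy.1, hfK_mem a ha.1 y hxy.2.1, hxy.2.2⟩
      · -- recursion
        apply IH
        intro a ha
        have haS : a ∈ S := ha.1
        have hprops := hf (Cmp G S a) a haS rfl
        obtain ⟨⟨pstar, hpstar⟩, hsubK, hdeg2, hconnP, hhang⟩ := hprops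
        have hpstarK : pstar ∈ Cmp G S a := hsubK hpstar
        have hconnK : Relation.ReflTransGen (Stp G (Cmp G S a)) a pstar :=
          conn_in_cmp mem_cmp_self hpstarK
        have hanP : a ∉ f (Cmp G S a) := fun hc => ha.2 ⟨haS, hc⟩
        obtain ⟨y₀, z₀, hch, hstep, hy₀Q, hz₀Q⟩ := first_enter hconnK hanP hpstar
        have hy₀K : y₀ ∈ Cmp G S a := hstep.1
        have hz₀K : z₀ ∈ Cmp G S a := hstep.2.1
        -- members of the new component
        have hmemC' : ∀ x ∈ Cmp G (S \ P) a, x ∈ Cmp G S a ∧ x ∉ P := by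
          intro x hx
          induction hx with
          | refl => exact ⟨mem_cmp_self, ha.2⟩
          | @tail m c hm hmc ih =>
              exact ⟨Relation.ReflTransGen.tail ih.1 ⟨hmc.1.1, hmc.2.1.1, hmc.2.2⟩,
                hmc.2.1.2⟩
        -- `a` lies in the hanging region at the entry edge
        have haReg : a ∈ Reg G (Cmp G S a) s(z₀, y₀) y₀ := by
          have hca : Relation.ReflTransGen (StpA G (Cmp G S a) s(z₀, y₀)) a y₀ := by
            refine Relation.ReflTransGen.mono ?_ _ _ hch
            intro x w hxw
            refine ⟨hxw.1.1, hxw.2.1.1, hxw.2.2, ?_⟩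
            intro hc
            rw [Sym2.eq_iff] at hc
            rcases hc with ⟨h1, -⟩ | ⟨-, h2⟩
            · exact hxw.1.2 (by rw [h1]; exact hz₀Q)
            · exact hxw.2.1.2 (by rw [h2]; exact hz₀Q)
          exact reg_closed' hca reg_mem_self
        have hC'reg : Cmp G (S \ P) a ⊆ Reg G (Cmp G S a) s(z₀, y₀) y₀ := by
          intro v hv
          have hvchain : Relation.ReflTransGen (Stp G (Cmp G (S \ P) a)) a v :=
            conn_in_cmp mem_cmp_self hv
          have hmono : Relation.ReflTransGen (StpA G (Cmp G S a) s(z₀, y₀)) a v := by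
            refine Relation.ReflTransGen.mono ?_ _ _ hvchain
            intro x w hxw
            obtain ⟨hxK, hxP⟩ := hmemC' x hxw.1
            obtain ⟨hwK, hwP⟩ := hmemC' w hxw.2.1
            refine ⟨hxK, hwK, hxw.2.2, ?_⟩
            intro hc
            rw [Sym2.eq_iff] at hc
            have hz₀P : z₀ ∈ P := hfK_mem a haS z₀ hz₀Q
            rcases hc with ⟨h1, -⟩ | ⟨-, h2⟩
            · exact hxP (by rw [h1]; exact hz₀P)
            · exact hwP (by rw [h2]; exact hz₀P)
          exact reg_closed hmono haReg
        have hadj₀ : G.Adj z₀ y₀ := hstep.2.2.symm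
        obtain ⟨i, hiK, hiR⟩ := hhang z₀ y₀ hz₀Q hy₀Q hadj₀ hy₀K
        have hsubNF : Finset.univ.filter (fun j => Touches Fam j (Cmp G (S \ P) a)) ⊆
            (Finset.univ.filter (fun j => Touches Fam j (Cmp G S a))).erase i := by
          intro j hj
          rw [Finset.mem_filter] at hj
          rw [Finset.mem_erase, Finset.mem_filter]
          refine ⟨?_, Finset.mem_univ _,
            touches_mono Fam (fun x hx => (hmemC' x hx).1) hj.2⟩
          rintro rfl
          exact hiR (touches_mono Fam hC'reg hj.2)
        have h1 := Finset.card_le_card hsubNF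
        have h2 : ((Finset.univ.filter
              (fun j => Touches Fam j (Cmp G S a))).erase i).card =
            (Finset.univ.filter (fun j => Touches Fam j (Cmp G S a))).card - 1 :=
          Finset.card_erase_of_mem (by
            rw [Finset.mem_filter]; exact ⟨Finset.mem_univ _, hiK⟩)
        rw [h2] at h1
        have h3 := hcard a haS
        omega

end PWAux

/-- Let `T` be a tree in which every non-leaf vertex has degree at
least 4, and suppose `E(T)` can be covered by `c` connected subtrees of maximum degree
at most 3.  Then the pathwidth of `T` is at most `c`. -/
theorem pathwidth_le_of_cover {V : Type*} [Fintype V] (G : SimpleGraph V)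
    (hT : G.IsTree)
    (hdeg : ∀ v : V, (G.neighborSet v).ncard ≠ 1 → 4 ≤ (G.neighborSet v).ncard)
    (c : ℕ) (F : Fin c → G.Subgraph)
    (hF : ∀ i, (F i).Connected ∧ ∀ v : V, ((F i).neighborSet v).ncard ≤ 3)
    (hcov : ∀ e ∈ G.edgeSet, ∃ i, e ∈ (F i).edgeSet) :
    PwLE G c Set.univ := by
  classical
  have hcov' : ∀ x y : V, G.Adj x y → ∃ i, (F i).Adj x y := by
    intro x y h
    obtain ⟨i, hi⟩ := hcov s(x, y) ((G.mem_edgeSet).mpr h)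
    exact ⟨i, (SimpleGraph.Subgraph.mem_edgeSet).mp hi⟩
  refine PWAux.main_lem hT hdeg F (fun i => (hF i).1) (fun i => (hF i).2) hcov' c Set.univ ?_
  intro a _
  refine le_trans (Finset.card_filter_le _ _) ?_
  simp
end

section
/- For all integers k ≥ d ≥ 1 and n₁,…,n_k ≥ 0, the minimum number of pairwise disjoint cliques, each with at most d vertices, needed to partition the vertex set of the complete k-partite graph K⟨n₁,…,n_k⟩ equals max{ max_i n_i , ⌈(Σ_i n_i)/d⌉ }. -/
section Aux
variable {k : ℕ} (n : Fin k → ℕ)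

/-- lexicographic index of a vertex -/
def vidx (v : Σ i : Fin k, Fin (n i)) : ℕ := (∑ j ∈ Finset.Iio v.1, n j) + v.2.val

lemma vidx_lt_off {i i' : Fin k} (h : i < i') (a : Fin (n i)) :
    vidx n ⟨i, a⟩ < ∑ j ∈ Finset.Iio i', n j := by
  have h1 : (∑ j ∈ Finset.Iio i, n j) + n i = ∑ j ∈ Finset.Iic i, n j := by
    rw [← Finset.Iio_insert, Finset.sum_insert (by simp)]; ring
  have h2 : Finset.Iic i ⊆ Finset.Iio i' := fun x hx =>
    Finset.mem_Iio.2 (lt_of_le_of_lt (Finset.mem_Iic.1 hx) h)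
  calc vidx n ⟨i, a⟩ < (∑ j ∈ Finset.Iio i, n j) + n i := by
        simpa [vidx] using a.2
    _ = ∑ j ∈ Finset.Iic i, n j := h1
    _ ≤ ∑ j ∈ Finset.Iio i', n j := Finset.sum_le_sum_of_subset h2

lemma vidx_lt (v : Σ i : Fin k, Fin (n i)) : vidx n v < ∑ i, n i := by
  obtain ⟨i, a⟩ := v
  have h1 : (∑ j ∈ Finset.Iio i, n j) + n i = ∑ j ∈ Finset.Iic i, n j := by
    rw [← Finset.Iio_insert, Finset.sum_insert (by simp)]; ring
  calc vidx n ⟨i, a⟩ < (∑ j ∈ Finset.Iio i, n j) + n i := by simpa [vidx] using a.2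
    _ = ∑ j ∈ Finset.Iic i, n j := h1
    _ ≤ ∑ i, n i := Finset.sum_le_sum_of_subset (Finset.subset_univ _)

lemma vidx_inj : Function.Injective (vidx n) := by
  rintro ⟨i, a⟩ ⟨i', b⟩ h
  rcases lt_trichotomy i i' with hlt | heq | hgt
  · have := vidx_lt_off n hlt a
    have : vidx n ⟨i', b⟩ < ∑ j ∈ Finset.Iio i', n j := h ▸ this
    simp [vidx] at this
  · subst heq
    simp only [vidx] at h
    have : a = b := Fin.ext (by omega)
    rw [this]
  · have := vidx_lt_off n hgt b
    have : vidx n ⟨i, a⟩ < ∑ j ∈ Finset.Iio i, n j := h ▸ this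
    simp [vidx] at this

lemma vidx_same_class {i : Fin k} (a b : Fin (n i)) :
    vidx n ⟨i, b⟩ < vidx n ⟨i, a⟩ + n i := by
  simp only [vidx]; omega

end Aux

/-- For all integers `k ≥ d ≥ 1` and `n₁, …, n_k ≥ 0`, the minimum
number of pairwise-disjoint cliques, each with at most `d` vertices, needed to
partition the vertex set of the complete `k`-partite graph `K⟨n₁,…,n_k⟩` equals
`max (max_i n_i) ⌈(Σ_i n_i)/d⌉`.  Vertices are pairs `⟨i, a⟩` with `a : Fin (n i)`,
and two vertices are adjacent iff their first components differ, so a clique is a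
set of vertices with pairwise distinct first components. -/
theorem completeMultipartite_clique_partition (k d : ℕ) (hd : 1 ≤ d) (hdk : d ≤ k)
    (n : Fin k → ℕ) :
    IsLeast {m : ℕ | ∃ C : Fin m → Finset (Σ i : Fin k, Fin (n i)),
        (∀ j, (C j).card ≤ d ∧
          ∀ u ∈ C j, ∀ v ∈ C j, u ≠ v → (u : Σ i : Fin k, Fin (n i)).1 ≠ v.1) ∧
        (∀ v : Σ i : Fin k, Fin (n i), ∃! j, v ∈ C j)}
      (max (Finset.univ.sup n) ((∑ i, n i + d - 1) / d)) := by
  set N : ℕ := ∑ i, n i with hN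
  set m : ℕ := max (Finset.univ.sup n) ((N + d - 1) / d) with hm
  constructor
  · -- membership
    rcases Nat.eq_zero_or_pos m with hm0 | hm0
    · -- m = 0 : no vertices
      refine ⟨fun _ => ∅, fun j => ⟨by simp, by simp⟩, fun v => ?_⟩
      exfalso
      have h1 : n v.1 ≤ Finset.univ.sup n := Finset.le_sup (Finset.mem_univ _)
      have h2 : Finset.univ.sup n ≤ m := le_max_left _ _
      have := v.2.2
      omega
    · have hNmd : N ≤ m * d := by
        have hq : N ≤ ((N + d - 1) / d) * d := by
          have h1 := Nat.div_add_mod (N + d - 1) d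
          have h2 : (N + d - 1) % d < d := Nat.mod_lt _ hd
          set q := (N + d - 1) / d
          set r := (N + d - 1) % d
          have : d * q = q * d := Nat.mul_comm _ _
          omega
        calc N ≤ ((N + d - 1) / d) * d := hq
          _ ≤ m * d := Nat.mul_le_mul_right _ (le_max_right _ _)
      set C : Fin m → Finset (Σ i : Fin k, Fin (n i)) :=
        fun j => Finset.univ.filter (fun v => vidx n v % m = j.val) with hC
      have memC : ∀ (v) (j), v ∈ C j ↔ vidx n v % m = j.val := by
        intro v j; simp [hC]
      refine ⟨C, fun j => ⟨?_, ?_⟩, fun v => ?_⟩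
      · -- card bound
        have : ((C j).image (fun v => vidx n v / m)) ⊆ Finset.range d := by
          intro x hx
          simp only [Finset.mem_image] at hx
          obtain ⟨v, _, rfl⟩ := hx
          have h1 := vidx_lt n v
          have hc : d * m = m * d := Nat.mul_comm _ _
          have : vidx n v < d * m := by omega
          exact Finset.mem_range.2 ((Nat.div_lt_iff_lt_mul hm0).2 (by omega))
        have hcard : ((C j).image (fun v => vidx n v / m)).card = (C j).card := by
          apply Finset.card_image_of_injOn
          intro u hu v hv h
          have hu' := (memC u j).1 hu
          have hv' := (memC v j).1 hv
          apply vidx_inj n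
          dsimp only at h
          have h1 := Nat.div_add_mod (vidx n u) m
          have h2 := Nat.div_add_mod (vidx n v) m
          rw [h] at h1
          omega
        calc (C j).card = _ := hcard.symm
          _ ≤ (Finset.range d).card := Finset.card_le_card this
          _ = d := Finset.card_range d
      · -- rainbow
        rintro ⟨i, a⟩ hu ⟨i', b⟩ hv hne heq
        simp only at heq
        subst heq
        have ha := (memC _ j).1 hu
        have hb := (memC _ j).1 hv
        have hne' : vidx n ⟨i, a⟩ ≠ vidx n ⟨i, b⟩ := fun h => hne (vidx_inj n h)
        have hmod : vidx n ⟨i, a⟩ % m = vidx n ⟨i, b⟩ % m := by omega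
        have hni : n i ≤ m := le_trans (Finset.le_sup (Finset.mem_univ _)) (le_max_left _ _)
        -- wlog via cases
        rcases Nat.lt_or_ge (vidx n ⟨i, a⟩) (vidx n ⟨i, b⟩) with hlt | hge
        · have hdvd : m ∣ vidx n ⟨i, b⟩ - vidx n ⟨i, a⟩ :=
            Nat.dvd_of_mod_eq_zero (Nat.sub_mod_eq_zero_of_mod_eq hmod.symm)
          have := Nat.le_of_dvd (by omega) hdvd
          have := vidx_same_class n a b
          omega
        · have hlt : vidx n ⟨i, b⟩ < vidx n ⟨i, a⟩ := by omega
          have hdvd : m ∣ vidx n ⟨i, a⟩ - vidx n ⟨i, b⟩ :=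
            Nat.dvd_of_mod_eq_zero (Nat.sub_mod_eq_zero_of_mod_eq hmod)
          have := Nat.le_of_dvd (by omega) hdvd
          have := vidx_same_class n b a
          omega
      · -- existence & uniqueness
        refine ⟨⟨vidx n v % m, Nat.mod_lt _ hm0⟩, (memC v _).2 rfl, fun j hj => ?_⟩
        exact Fin.ext ((memC v j).1 hj).symm
  · -- lower bound
    rintro m' ⟨C, hC1, hC2⟩
    apply max_le
    · apply Finset.sup_le
      intro i _
      have : Fintype.card (Fin (n i)) ≤ Fintype.card (Fin m') := by
        apply Fintype.card_le_of_injective (fun a => (hC2 ⟨i, a⟩).exists.choose)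
        intro a b hab
        by_contra hne
        have ha := (hC2 ⟨i, a⟩).exists.choose_spec
        have hb := (hC2 ⟨i, b⟩).exists.choose_spec
        dsimp only at hab
        rw [hab] at ha
        have : (⟨i, a⟩ : Σ i : Fin k, Fin (n i)) ≠ ⟨i, b⟩ := by
          simp [Fin.ext_iff]; intro h; exact hne (Fin.ext h)
        exact (hC1 _).2 _ ha _ hb this rfl
      simpa using this
    · have hcount : N ≤ m' * d := by
        have h1 : (Finset.univ : Finset (Σ i : Fin k, Fin (n i))) ⊆
            Finset.univ.biUnion C := by
          intro v _
          obtain ⟨j, hj, -⟩ := hC2 v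
          exact Finset.mem_biUnion.2 ⟨j, Finset.mem_univ _, hj⟩
        have h2 : (Finset.univ : Finset (Σ i : Fin k, Fin (n i))).card = N := by
          simp [hN, Fintype.card_sigma]
        calc N = _ := h2.symm
          _ ≤ (Finset.univ.biUnion C).card := Finset.card_le_card h1
          _ ≤ ∑ j, (C j).card := Finset.card_biUnion_le
          _ ≤ ∑ _j : Fin m', d := Finset.sum_le_sum (fun j _ => (hC1 j).1)
          _ = m' * d := by simp [Nat.mul_comm]
      rw [Nat.div_le_iff_le_mul_add_pred hd]
      have : d * m' = m' * d := Nat.mul_comm _ _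
      omega
end

section
/- Fix integers A, B ≥ 1 and d ≥ 2 with A ≤ B and (d−2)B ≤ (d−1)A. If non-negative integers x, y₁, y₂, z satisfy (d−2)x + (d−1)(y₁+y₂) + dz ≥ A, (d−1)(x+y₁) ≥ B, and (d−1)(x+y₂) ≥ B, then x + y₁ + y₂ + z ≥ ⌈A/d + (2/d)⌈B/(d−1)⌉⌉. Moreover this bound is achieved by x = ⌈B/(d−1)⌉, y₁ = y₂ = 0, z = ⌈(A − x(d−2))/d⌉. -/
/-- Fix integers `A, B ≥ 1` and `d ≥ 2` with `A ≤ B` and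
`(d−2)B ≤ (d−1)A`.  Any non-negative integers `x, y₁, y₂, z` satisfying the three
linear inequalities have `x + y₁ + y₂ + z ≥ ⌈A/d + (2/d)⌈B/(d−1)⌉⌉`, and this bound
is achieved by `x = ⌈B/(d−1)⌉`, `y₁ = y₂ = 0`, `z = ⌈(A − x(d−2))/d⌉`. -/
theorem integerProgram_solution (A B d : ℤ) (hA : 1 ≤ A) (hB : 1 ≤ B) (hd : 2 ≤ d)
    (hAB : A ≤ B) (hdAB : (d - 2) * B ≤ (d - 1) * A) :
    (∀ x y₁ y₂ z : ℤ, 0 ≤ x → 0 ≤ y₁ → 0 ≤ y₂ → 0 ≤ z →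
      A ≤ (d - 2) * x + (d - 1) * (y₁ + y₂) + d * z →
      B ≤ (d - 1) * (x + y₁) →
      B ≤ (d - 1) * (x + y₂) →
      ⌈(A : ℚ) / d + 2 / d * (⌈(B : ℚ) / (d - 1)⌉ : ℚ)⌉ ≤ x + y₁ + y₂ + z) ∧
    (let x : ℤ := ⌈(B : ℚ) / (d - 1)⌉
     let z : ℤ := ⌈((A : ℚ) - x * (d - 2)) / d⌉
     0 ≤ x ∧ 0 ≤ z ∧
       A ≤ (d - 2) * x + (d - 1) * (0 + 0) + d * z ∧
       B ≤ (d - 1) * (x + 0) ∧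
       x + 0 + 0 + z = ⌈(A : ℚ) / d + 2 / d * (⌈(B : ℚ) / (d - 1)⌉ : ℚ)⌉) := by
  have hdQ : (0:ℚ) < (d:ℚ) := by
    have : (2:ℚ) ≤ (d:ℚ) := by exact_mod_cast hd
    linarith
  have hd1Q : (0:ℚ) < (d:ℚ) - 1 := by
    have : (2:ℚ) ≤ (d:ℚ) := by exact_mod_cast hd
    linarith
  set x₀ : ℤ := ⌈(B : ℚ) / ((d:ℚ) - 1)⌉ with hx₀def
  -- basic facts about x₀
  have hBx₀ : (B:ℚ) ≤ ((d:ℚ) - 1) * (x₀:ℚ) := by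
    have := Int.le_ceil ((B : ℚ) / ((d:ℚ) - 1))
    rw [div_le_iff₀ hd1Q] at this
    rw [← hx₀def] at this
    linarith
  have hBx₀' : B ≤ (d - 1) * x₀ := by
    have : (B:ℚ) ≤ (((d - 1) * x₀ : ℤ) : ℚ) := by push_cast; linarith
    exact_mod_cast this
  have hx₀upper : (d - 1) * x₀ ≤ B + d - 2 := by
    have h := Int.ceil_lt_add_one ((B : ℚ) / ((d:ℚ) - 1))
    rw [← hx₀def] at h
    have h2 : ((d:ℚ) - 1) * (x₀:ℚ) < (B:ℚ) + ((d:ℚ) - 1) := by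
      have hb : ((B:ℚ) / ((d:ℚ) - 1)) * ((d:ℚ) - 1) = (B:ℚ) :=
        div_mul_cancel₀ _ (ne_of_gt hd1Q)
      nlinarith [h]
    have h3 : ((d - 1) * x₀ : ℤ) < B + (d - 1) := by
      have : (((d - 1) * x₀ : ℤ) : ℚ) < ((B + (d-1) : ℤ) : ℚ) := by push_cast; nlinarith [h]
      exact_mod_cast this
    omega
  have hle_x₀ : ∀ n : ℤ, B ≤ (d - 1) * n → x₀ ≤ n := by
    intro n h
    rw [hx₀def, Int.ceil_le, div_le_iff₀ hd1Q]
    have : (B:ℚ) ≤ (((d - 1) * n : ℤ) : ℚ) := by exact_mod_cast h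
    push_cast at this
    linarith
  have hceil_target : ⌈(A : ℚ) / d + 2 / d * (x₀ : ℚ)⌉ = ⌈((A + 2 * x₀ : ℤ) : ℚ) / d⌉ := by
    congr 1
    push_cast
    field_simp
  constructor
  · intro x y₁ y₂ z hx hy1 hy2 hz h1 h2 h3
    rw [hceil_target, Int.ceil_le, div_le_iff₀ hdQ]
    have e1 : x₀ ≤ x + y₁ := hle_x₀ _ h2
    have e2 : x₀ ≤ x + y₂ := hle_x₀ _ h3
    have key : d * (x + y₁ + y₂ + z)
        = ((d - 2) * x + (d - 1) * (y₁ + y₂) + d * z) + ((x + y₁) + (x + y₂)) := by ring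
    have hZ : A + 2 * x₀ ≤ d * (x + y₁ + y₂ + z) := by
      rw [key]; linarith
    have : ((A + 2 * x₀ : ℤ) : ℚ) ≤ ((d * (x + y₁ + y₂ + z) : ℤ) : ℚ) := by exact_mod_cast hZ
    push_cast at this ⊢
    linarith
  · dsimp only
    set z₀ : ℤ := ⌈((A:ℚ) - (x₀:ℚ) * ((d:ℚ) - 2)) / (d:ℚ)⌉ with hz₀def
    have hx₀pos : 0 ≤ x₀ := by
      rw [hx₀def]
      apply Int.ceil_nonneg
      apply div_nonneg _ (le_of_lt hd1Q)
      have : (1:ℚ) ≤ (B:ℚ) := by exact_mod_cast hB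
      linarith
    have hzlow : (A:ℚ) - (x₀:ℚ) * ((d:ℚ) - 2) ≤ (d:ℚ) * (z₀:ℚ) := by
      have := Int.le_ceil (((A:ℚ) - (x₀:ℚ) * ((d:ℚ) - 2)) / (d:ℚ))
      rw [div_le_iff₀ hdQ] at this
      rw [← hz₀def] at this
      linarith
    have hAz : A ≤ (d - 2) * x₀ + d * z₀ := by
      have : ((A:ℤ) : ℚ) ≤ (((d - 2) * x₀ + d * z₀ : ℤ) : ℚ) := by push_cast; linarith
      exact_mod_cast this
    have hz₀pos : 0 ≤ z₀ := by
      -- need A - x₀(d-2) > -d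
      have hkey : (d - 2) * x₀ < A + d := by
        have h1 : (d - 1) * ((d - 2) * x₀) ≤ (d - 2) * (B + d - 2) := by
          nlinarith
        have h2 : (d - 2) * B ≤ (d - 1) * A := hdAB
        nlinarith
      have : (-1 : ℤ) < z₀ := by
        rw [hz₀def]
        rw [Int.lt_ceil]
        rw [lt_div_iff₀ hdQ]
        have : (((d - 2) * x₀ : ℤ) : ℚ) < ((A + d : ℤ) : ℚ) := by exact_mod_cast hkey
        push_cast at this ⊢
        linarith
      omega
    refine ⟨hx₀pos, hz₀pos, by linarith, by simpa using hBx₀', ?_⟩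
    rw [hceil_target]
    have harg : ((A + 2 * x₀ : ℤ) : ℚ) / (d:ℚ)
        = ((A:ℚ) - (x₀:ℚ) * ((d:ℚ) - 2)) / (d:ℚ) + (x₀ : ℚ) := by
      field_simp
      push_cast
      ring
    rw [harg, Int.ceil_add_intCast, ← hz₀def]
    ring
end
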